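/- The specialist aggregation algorithm with prior π achieves, for every T ≥ 1 and every probability vector u = (u_1,…,u_M), the bound Σ_{i=1}^M u_i · Σ_{t ≤ T : i ∈ A_t} (ℓ_t − ℓ_{i,t}) ≤ (1/η) · KL(u ‖ π), where KL(u ‖ π) = Σ_{i=1}^M u_i log(u_i/π_i). -/

import Mathlib

private lemma sum_equivFin_aux {α : Type*} {β : Type*} [AddCommMonoid β] (s : Finset α)
    (f : α → β) : ∑ k : Fin s.card, f ((s.equivFin.symm k : {x // x ∈ s}) : α) = ∑ i ∈ s, f i := by
  rw [Equiv.sum_comp s.equivFin.symm (fun i : {x // x ∈ s} => f i)]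
  exact Finset.sum_coe_sort s f


/-- **Specialist aggregation regret bound (Proposition 2, first part).**
The specialist aggregation algorithm with prior π achieves, for every specialist i
and every T ≥ 1, the bound Σ_{t ≤ T : i ∈ A_t} (ℓ_t − ℓ_{i,t}) ≤ (1/η)·log(1/π_i). -/
theorem specialist_aggregation_regret_KL
    {E : Type*} [AddCommGroup E] [Module ℝ E] {Y : Type*}
    (X : Set E) (ℓ : E → Y → ℝ) (η : ℝ) (hη : 0 < η)
    (hexp : ∀ (yy : Y) (N : ℕ), 1 ≤ N → ∀ xs : Fin N → E, (∀ i, xs i ∈ X) →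
      ∀ vv : Fin N → ℝ, (∀ i, 0 ≤ vv i) → (∑ i, vv i) = 1 →
      ℓ (∑ i, vv i • xs i) yy ≤ -(1/η) * Real.log (∑ i, vv i * Real.exp (-η * ℓ (xs i) yy)))
    (M : ℕ) (hM : 1 ≤ M)
    (π : Fin M → ℝ) (hπpos : ∀ i, 0 < π i) (hπsum : ∑ i, π i = 1)
    (A : ℕ → Finset (Fin M)) (hA : ∀ t, 1 ≤ t → (A t).Nonempty)
    (xe : Fin M → ℕ → E) (hxe : ∀ i t, 1 ≤ t → i ∈ A t → xe i t ∈ X)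
    (y : ℕ → Y) (xl : ℕ → E)
    (Lc : Fin M → ℕ → ℝ)
    -- completed cumulative losses L_{i,t} = Σ_{s ≤ t : i ∈ A_s} ℓ_{i,s} + Σ_{s ≤ t : i ∉ A_s} ℓ_s
    (hLc : ∀ i t, Lc i t = ∑ s ∈ Finset.Icc 1 t,
      (if i ∈ A s then ℓ (xe i s) (y s) else ℓ (xl s) (y s)))
    -- the learner aggregates the active specialists with weights w_{i,t} = π_i exp(−η L_{i,t−1})
    (hxl : ∀ t, 1 ≤ t → xl t =
      (∑ i ∈ A t, π i * Real.exp (-η * Lc i (t-1)))⁻¹ •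
        ∑ i ∈ A t, (π i * Real.exp (-η * Lc i (t-1))) • xe i t) :
    ∀ T : ℕ, 1 ≤ T → ∀ u : Fin M → ℝ, (∀ i, 0 ≤ u i) → (∑ i, u i) = 1 →
      ∑ i, u i * (∑ t ∈ (Finset.Icc 1 T).filter (fun t => i ∈ A t),
          (ℓ (xl t) (y t) - ℓ (xe i t) (y t)))
        ≤ (1/η) * ∑ i, u i * Real.log (u i / π i) := by
  intro T hT u hu husum
  classical
  set w : Fin M → ℕ → ℝ := fun i t => π i * Real.exp (-η * Lc i t) with hw
  have hwpos : ∀ i t, 0 < w i t := fun i t => mul_pos (hπpos i) (Real.exp_pos _)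
  set Φ : ℕ → ℝ := fun t => ∑ i, w i t with hΦdef
  have hΦpos : ∀ t, 0 < Φ t := fun t =>
    Finset.sum_pos (fun i _ => hwpos i t) ⟨⟨0, hM⟩, Finset.mem_univ _⟩
  have hLc0 : ∀ i, Lc i 0 = 0 := by intro i; rw [hLc]; simp
  have hΦ0 : Φ 0 = 1 := by
    simp only [hΦdef, hw, hLc0, mul_zero, Real.exp_zero, mul_one]
    exact hπsum
  -- key one-step inequality
  have key : ∀ n : ℕ, Φ (n+1) ≤ Real.exp (-η * ℓ (xl (n+1)) (y (n+1))) * Φ n := by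
    intro n
    have ht : 1 ≤ n + 1 := Nat.le_add_left 1 n
    have hAne := hA (n+1) ht
    have hstep : ∀ i, Lc i (n+1) = Lc i n +
        (if i ∈ A (n+1) then ℓ (xe i (n+1)) (y (n+1)) else ℓ (xl (n+1)) (y (n+1))) := by
      intro i
      rw [hLc, hLc, Finset.sum_Icc_succ_top (Nat.le_add_left 1 n)]
    have hwstep : ∀ i, w i (n+1) = w i n *
        Real.exp (-η * (if i ∈ A (n+1) then ℓ (xe i (n+1)) (y (n+1))
          else ℓ (xl (n+1)) (y (n+1)))) := by
      intro i
      simp only [hw, hstep i, mul_add, Real.exp_add, mul_assoc]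
    set W : ℝ := ∑ i ∈ A (n+1), w i n with hWdef
    have hW : 0 < W := Finset.sum_pos (fun i _ => hwpos i n) hAne
    -- main aggregation inequality on the active set
    have hmain : ∑ i ∈ A (n+1), w i n * Real.exp (-η * ℓ (xe i (n+1)) (y (n+1)))
        ≤ Real.exp (-η * ℓ (xl (n+1)) (y (n+1))) * W := by
      set N : ℕ := (A (n+1)).card with hNdef
      have hN : 1 ≤ N := Finset.card_pos.mpr hAne
      set e := (A (n+1)).equivFin with he
      set xs : Fin N → E := fun k => xe ((e.symm k : {x // x ∈ A (n+1)}) : Fin M) (n+1) with hxs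
      set vv : Fin N → ℝ := fun k => w ((e.symm k : {x // x ∈ A (n+1)}) : Fin M) n / W with hvv
      have hxsX : ∀ k, xs k ∈ X := by
        intro k
        exact hxe _ _ ht (e.symm k).2
      have hvv0 : ∀ k, 0 ≤ vv k := fun k => le_of_lt (div_pos (hwpos _ _) hW)
      have hvv1 : ∑ k, vv k = 1 := by
        have : ∑ k, vv k = ∑ i ∈ A (n+1), w i n / W :=
          sum_equivFin_aux (A (n+1)) (fun i => w i n / W)
        rw [this, ← Finset.sum_div, div_self (ne_of_gt hW)]
      have hxleq : xl (n+1) = ∑ k, vv k • xs k := by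
        have h1 : ∑ k, vv k • xs k = ∑ i ∈ A (n+1), (w i n / W) • xe i (n+1) :=
          sum_equivFin_aux (A (n+1)) (fun i => (w i n / W) • xe i (n+1))
        rw [h1, hxl (n+1) ht]
        simp only [Nat.add_sub_cancel, ← hw]
        rw [Finset.smul_sum]
        refine Finset.sum_congr rfl (fun i _ => ?_)
        rw [div_eq_inv_mul, smul_smul]
      have hval : ∑ k, vv k * Real.exp (-η * ℓ (xs k) (y (n+1)))
          = (∑ i ∈ A (n+1), w i n * Real.exp (-η * ℓ (xe i (n+1)) (y (n+1)))) / W := by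
        have : ∑ k, vv k * Real.exp (-η * ℓ (xs k) (y (n+1)))
            = ∑ i ∈ A (n+1), (w i n / W) * Real.exp (-η * ℓ (xe i (n+1)) (y (n+1))) :=
          sum_equivFin_aux (A (n+1)) (fun i => (w i n / W) * Real.exp (-η * ℓ (xe i (n+1)) (y (n+1))))
        rw [this, Finset.sum_div]
        exact Finset.sum_congr rfl (fun i _ => by ring)
      have hS : 0 < ∑ i ∈ A (n+1), w i n * Real.exp (-η * ℓ (xe i (n+1)) (y (n+1))) :=
        Finset.sum_pos (fun i _ => mul_pos (hwpos i n) (Real.exp_pos _)) hAne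
      have hbound := hexp (y (n+1)) N hN xs hxsX vv hvv0 hvv1
      rw [← hxleq, hval] at hbound
      set S : ℝ := ∑ i ∈ A (n+1), w i n * Real.exp (-η * ℓ (xe i (n+1)) (y (n+1)))
      -- from ℓ_t ≤ -(1/η) log (S/W), get S/W ≤ exp(-η ℓ_t)
      have hlog : Real.log (S / W) ≤ -η * ℓ (xl (n+1)) (y (n+1)) := by
        have := mul_le_mul_of_nonneg_left hbound (le_of_lt hη)
        rw [← mul_assoc] at this
        have hne : η * -(1/η) = -1 := by field_simp
        rw [hne] at this
        nlinarith [this]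
      have hSW : S / W ≤ Real.exp (-η * ℓ (xl (n+1)) (y (n+1))) := by
        calc S / W = Real.exp (Real.log (S / W)) := (Real.exp_log (div_pos hS hW)).symm
          _ ≤ _ := Real.exp_le_exp.mpr hlog
      calc S = (S / W) * W := by field_simp
        _ ≤ Real.exp (-η * ℓ (xl (n+1)) (y (n+1))) * W :=
            mul_le_mul_of_nonneg_right hSW (le_of_lt hW)
    -- assemble
    have hsplit : Φ (n+1) =
        (∑ i ∈ A (n+1), w i n * Real.exp (-η * ℓ (xe i (n+1)) (y (n+1))))
        + ∑ i ∈ Finset.univ.filter (fun i => i ∉ A (n+1)),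
            w i n * Real.exp (-η * ℓ (xl (n+1)) (y (n+1))) := by
      have h1 : Φ (n+1) = ∑ i, w i n *
          Real.exp (-η * (if i ∈ A (n+1) then ℓ (xe i (n+1)) (y (n+1))
            else ℓ (xl (n+1)) (y (n+1)))) :=
        Finset.sum_congr rfl (fun i _ => hwstep i)
      rw [h1, ← Finset.sum_filter_add_sum_filter_not Finset.univ (fun i => i ∈ A (n+1))]
      congr 1
      · rw [Finset.filter_mem_eq_inter, Finset.univ_inter]
        exact Finset.sum_congr rfl (fun i hi => by rw [if_pos hi])
      · exact Finset.sum_congr rfl (fun i hi => by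
          rw [if_neg (Finset.mem_filter.mp hi).2])
    rw [hsplit]
    have h2 : ∑ i ∈ Finset.univ.filter (fun i => i ∉ A (n+1)),
        w i n * Real.exp (-η * ℓ (xl (n+1)) (y (n+1)))
        = Real.exp (-η * ℓ (xl (n+1)) (y (n+1))) *
          ∑ i ∈ Finset.univ.filter (fun i => i ∉ A (n+1)), w i n := by
      rw [Finset.mul_sum]
      exact Finset.sum_congr rfl (fun i _ => mul_comm _ _)
    rw [h2]
    have hΦn : Φ n = W + ∑ i ∈ Finset.univ.filter (fun i => i ∉ A (n+1)), w i n := by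
      have h := Finset.sum_filter_add_sum_filter_not Finset.univ (fun i => i ∈ A (n+1))
        (fun i => w i n)
      rw [Finset.filter_mem_eq_inter, Finset.univ_inter] at h
      exact h.symm
    rw [hΦn, mul_add]
    exact add_le_add_left hmain _
  -- iterate: Φ T ≤ exp(-η Σ ℓ_t)
  have hΦT : ∀ n : ℕ, Φ n ≤ Real.exp (-η * ∑ t ∈ Finset.Icc 1 n, ℓ (xl t) (y t)) := by
    intro n
    induction n with
    | zero => simp [hΦ0]
    | succ m ih =>
      calc Φ (m+1) ≤ Real.exp (-η * ℓ (xl (m+1)) (y (m+1))) * Φ m := key m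
        _ ≤ Real.exp (-η * ℓ (xl (m+1)) (y (m+1))) *
              Real.exp (-η * ∑ t ∈ Finset.Icc 1 m, ℓ (xl t) (y t)) :=
            mul_le_mul_of_nonneg_left ih (le_of_lt (Real.exp_pos _))
        _ = Real.exp (-η * ∑ t ∈ Finset.Icc 1 (m+1), ℓ (xl t) (y t)) := by
            rw [← Real.exp_add, Finset.sum_Icc_succ_top (Nat.le_add_left 1 m)]
            ring_nf
  set C : ℝ := ∑ t ∈ Finset.Icc 1 T, ℓ (xl t) (y t) with hC
  -- Gibbs inequality: ∑ u_i log (w_i / u_i) ≤ log Φ T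
  have hGibbs : ∑ i, u i * Real.log (w i T / u i) ≤ Real.log (Φ T) := by
    have hper : ∀ i, u i * Real.log (w i T / u i) - u i * Real.log (Φ T)
        ≤ w i T / Φ T - u i := by
      intro i
      rcases eq_or_lt_of_le (hu i) with h0 | h0
      · rw [← h0]
        have h4 : (0:ℝ) ≤ w i T / Φ T :=
          div_nonneg (le_of_lt (hwpos i T)) (le_of_lt (hΦpos T))
        have h5 : (0:ℝ) * Real.log (w i T / 0) - 0 * Real.log (Φ T) = 0 := by ring
        rw [h5]
        linarith
      · have hwi := hwpos i T
        have h1 : Real.log (w i T / u i) - Real.log (Φ T)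
            = Real.log (w i T / (u i * Φ T)) := by
          rw [Real.log_div (ne_of_gt hwi) (ne_of_gt h0),
            Real.log_div (ne_of_gt hwi) (ne_of_gt (mul_pos h0 (hΦpos T))),
            Real.log_mul (ne_of_gt h0) (ne_of_gt (hΦpos T))]
          ring
        have h2 : Real.log (w i T / (u i * Φ T)) ≤ w i T / (u i * Φ T) - 1 :=
          Real.log_le_sub_one_of_pos (div_pos hwi (mul_pos h0 (hΦpos T)))
        have h3 : u i * Real.log (w i T / (u i * Φ T)) ≤ w i T / Φ T - u i := by
          have := mul_le_mul_of_nonneg_left h2 (le_of_lt h0)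
          calc u i * Real.log (w i T / (u i * Φ T))
              ≤ u i * (w i T / (u i * Φ T) - 1) := this
            _ = w i T / Φ T - u i := by
                field_simp [ne_of_gt h0, ne_of_gt (hΦpos T)]
        calc u i * Real.log (w i T / u i) - u i * Real.log (Φ T)
            = u i * (Real.log (w i T / u i) - Real.log (Φ T)) := by ring
          _ = u i * Real.log (w i T / (u i * Φ T)) := by rw [h1]
          _ ≤ w i T / Φ T - u i := h3
    have hsum := Finset.sum_le_sum (fun i (_ : i ∈ Finset.univ) => hper i)
    rw [Finset.sum_sub_distrib, Finset.sum_sub_distrib, ← Finset.sum_mul, husum,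
      ← Finset.sum_div] at hsum
    have hfold : (∑ i : Fin M, w i T) / Φ T = 1 := div_self (ne_of_gt (hΦpos T))
    rw [hfold, one_mul] at hsum
    linarith
  have hlogΦ : Real.log (Φ T) ≤ -η * C := by
    rw [Real.log_le_iff_le_exp (hΦpos T)]
    exact hΦT T
  -- rewrite the log terms
  have hlogw : ∀ i, u i * Real.log (w i T / u i)
      = u i * Real.log (π i) + u i * (-η * Lc i T) - u i * Real.log (u i) := by
    intro i
    rcases eq_or_lt_of_le (hu i) with h0 | h0
    · rw [← h0]; ring
    · have hwu : w i T = π i * Real.exp (-η * Lc i T) := rfl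
      rw [Real.log_div (ne_of_gt (hwpos i T)) (ne_of_gt h0), hwu,
        Real.log_mul (ne_of_gt (hπpos i)) (ne_of_gt (Real.exp_pos _)), Real.log_exp]
      ring
  have hKL : ∀ i, u i * Real.log (u i / π i)
      = u i * Real.log (u i) - u i * Real.log (π i) := by
    intro i
    rcases eq_or_lt_of_le (hu i) with h0 | h0
    · rw [← h0]; ring
    · rw [Real.log_div (ne_of_gt h0) (ne_of_gt (hπpos i))]; ring
  -- rewrite the regret terms
  have hreg : ∀ i, (∑ t ∈ (Finset.Icc 1 T).filter (fun t => i ∈ A t),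
      (ℓ (xl t) (y t) - ℓ (xe i t) (y t))) = C - Lc i T := by
    intro i
    rw [Finset.sum_filter, hLc, hC, ← Finset.sum_sub_distrib]
    refine Finset.sum_congr rfl (fun t _ => ?_)
    split_ifs <;> ring
  -- put everything together
  have hmain2 : η * (C - ∑ i, u i * Lc i T) ≤ ∑ i, u i * Real.log (u i / π i) := by
    have e1' : ∑ i, u i * (-η * Lc i T) = (-η) * ∑ i, u i * Lc i T := by
      rw [Finset.mul_sum]
      exact Finset.sum_congr rfl (fun i _ => by ring)
    have e1 : ∑ i, u i * Real.log (w i T / u i)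
        = ∑ i, u i * Real.log (π i) + (-η) * ∑ i, u i * Lc i T
          - ∑ i, u i * Real.log (u i) := by
      rw [Finset.sum_congr rfl (fun i (_ : i ∈ Finset.univ) => hlogw i),
        Finset.sum_sub_distrib, Finset.sum_add_distrib, e1']
    have e2 : ∑ i, u i * Real.log (u i / π i)
        = ∑ i, u i * Real.log (u i) - ∑ i, u i * Real.log (π i) := by
      rw [← Finset.sum_sub_distrib]
      exact Finset.sum_congr rfl (fun i _ => hKL i)
    have := le_trans hGibbs hlogΦ
    rw [e1] at this
    rw [e2]
    linarith
  have hfinal : (C - ∑ i, u i * Lc i T) ≤ (1/η) * ∑ i, u i * Real.log (u i / π i) := by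
    have h := (le_div_iff₀' hη).mpr hmain2
    calc C - ∑ i, u i * Lc i T ≤ (∑ i, u i * Real.log (u i / π i)) / η := h
      _ = (1/η) * ∑ i, u i * Real.log (u i / π i) := by ring
  calc ∑ i, u i * (∑ t ∈ (Finset.Icc 1 T).filter (fun t => i ∈ A t),
        (ℓ (xl t) (y t) - ℓ (xe i t) (y t)))
      = ∑ i, u i * (C - Lc i T) := Finset.sum_congr rfl (fun i _ => by rw [hreg i])
    _ = C - ∑ i, u i * Lc i T := by
        have h : ∀ i ∈ Finset.univ, u i * (C - Lc i T) = u i * C - u i * Lc i T :=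
          fun i _ => by ring
        rw [Finset.sum_congr rfl h, Finset.sum_sub_distrib, ← Finset.sum_mul, husum, one_mul]
    _ ≤ (1/η) * ∑ i, u i * Real.log (u i / π i) := hfinal
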